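/- Let T be an R-tree with a minimal isometric action of F_N. The action is indecomposable if and only if T admits no transverse family. -/

import Mathlib

open Pointwise

/-- The segment `[x,y]` in a metric space (in an `ℝ`-tree this is the arc from `x` to `y`). -/
def seg {T : Type*} [MetricSpace T] (x y : T) : Set T :=
  {z : T | dist x z + dist z y = dist x y}

/-- An `ℝ`-tree: a geodesic metric space that is `0`-hyperbolic (four-point condition),
equivalently any two points are joined by a unique arc, isometric to a real interval. -/
def IsRTree (T : Type*) [MetricSpace T] : Prop :=
  (∀ x y : T, ∃ f : ℝ → T, f 0 = x ∧ f (dist x y) = y ∧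
      ∀ s ∈ Set.Icc (0 : ℝ) (dist x y), ∀ t ∈ Set.Icc (0 : ℝ) (dist x y),
        dist (f s) (f t) = |s - t|) ∧
  ∀ x y z w : T, dist x y + dist z w ≤ max (dist x z + dist y w) (dist x w + dist y z)

/-- A subtree: a convex subset. -/
def IsSubtree {T : Type*} [MetricSpace T] (Y : Set T) : Prop :=
  ∀ x ∈ Y, ∀ y ∈ Y, seg x y ⊆ Y

/-- An arc: a subset isometric to a nondegenerate closed real interval. -/
def IsArc {T : Type*} [MetricSpace T] (A : Set T) : Prop :=
  ∃ (a b : ℝ) (f : ℝ → T), a < b ∧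
    (∀ s ∈ Set.Icc a b, ∀ t ∈ Set.Icc a b, dist (f s) (f t) = |s - t|) ∧
    A = f '' Set.Icc a b

/-- A transverse family: a `G`-invariant collection of nondegenerate subtrees, any two
distinct members of which intersect in at most one point. -/
structure IsTransverseFamily (G : Type*) {T : Type*} [Group G] [MulAction G T]
    [MetricSpace T] (F : Set (Set T)) : Prop where
  invariant : ∀ (g : G), ∀ Y ∈ F, g • Y ∈ F
  subtree : ∀ Y ∈ F, IsSubtree Y
  nondeg : ∀ Y ∈ F, ¬Y.Subsingleton
  transverse : ∀ Y ∈ F, ∀ Y' ∈ F, Y ≠ Y' → (Y ∩ Y').Subsingleton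

/-- Mixing: every arc `J` is covered by finitely many translates of any given arc `I`. -/
def IsMixing (G : Type*) (T : Type*) [Group G] [MulAction G T] [MetricSpace T] : Prop :=
  ∀ I J : Set T, IsArc I → IsArc J → ∃ (r : ℕ) (g : Fin r → G), J ⊆ ⋃ i, g i • I

/-- Indecomposable: mixing, with the covering translates forming a chain in which
consecutive translates overlap in a nondegenerate set. -/
def IsIndecomposable (G : Type*) (T : Type*) [Group G] [MulAction G T] [MetricSpace T] : Prop :=
  ∀ I J : Set T, IsArc I → IsArc J →
    ∃ (r : ℕ) (g : Fin (r + 1) → G), J ⊆ ⋃ i, g i • I ∧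
      ∀ i : Fin r, ¬(g i.castSucc • I ∩ g i.succ • I).Subsingleton

/-- A transverse covering: a transverse family of closed subtrees such that every arc of `T`
is covered by finitely many members. -/
structure IsTransverseCovering (G : Type*) {T : Type*} [Group G] [MulAction G T]
    [MetricSpace T] (F : Set (Set T)) extends IsTransverseFamily G F : Prop where
  closed : ∀ Y ∈ F, IsClosed Y
  covers : ∀ A : Set T, IsArc A →
    ∃ (r : ℕ) (Ys : Fin r → Set T), (∀ i, Ys i ∈ F) ∧ A ⊆ ⋃ i, Ys i

/-- A minimal action: no proper nonempty invariant subtree. -/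
def IsMinimalAction (G : Type*) (T : Type*) [Group G] [MulAction G T] [MetricSpace T] : Prop :=
  ∀ Y : Set T, Y.Nonempty → IsSubtree Y → (∀ g : G, g • Y = Y) → Y = Set.univ


set_option linter.unusedSectionVars false
set_option linter.unusedVariables false

section SegBasic
variable {T : Type*} [MetricSpace T]

lemma left_mem_seg (x y : T) : x ∈ seg x y := by simp [seg]

lemma right_mem_seg (x y : T) : y ∈ seg x y := by simp [seg]

lemma seg_comm (x y : T) : seg x y = seg y x := by
  ext z; simp only [seg, Set.mem_setOf_eq, dist_comm z x, dist_comm z y, dist_comm x y]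
  constructor <;> intro h <;> linarith

lemma mem_seg_dist_le {x y z : T} (h : z ∈ seg x y) : dist x z ≤ dist x y := by
  have h' : dist x z + dist z y = dist x y := h
  have := dist_nonneg (x := z) (y := y); linarith

/-- transitivity: `z ∈ [x,m]`, `m ∈ [x,y]` implies `z ∈ [x,y]`. -/
lemma seg_trans_left {x y m z : T} (hz : z ∈ seg x m) (hm : m ∈ seg x y) : z ∈ seg x y := by
  have hz' : dist x z + dist z m = dist x m := hz
  have hm' : dist x m + dist m y = dist x y := hm
  have h1 : dist x y ≤ dist x z + dist z y := dist_triangle x z y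
  have h2 : dist z y ≤ dist z m + dist m y := dist_triangle z m y
  show dist x z + dist z y = dist x y
  linarith

lemma seg_trans_right {x y m z : T} (hm : m ∈ seg x y) (hz : z ∈ seg m y) : z ∈ seg x y := by
  rw [seg_comm] at hm hz ⊢
  exact seg_trans_left hz hm

/-- uniqueness of points on a segment at given distance, from 0-hyperbolicity. -/
lemma seg_unique (hT : IsRTree T) {x y z w : T} (hz : z ∈ seg x y) (hw : w ∈ seg x y)
    (h : dist x z = dist x w) : z = w := by
  have hz' : dist x z + dist z y = dist x y := hz
  have hw' : dist x w + dist w y = dist x y := hw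
  have h4 := hT.2 z w x y
  rw [dist_comm z x, dist_comm w x] at h4
  have : dist z w ≤ 0 := by
    rcases le_max_iff.mp h4 with h' | h' <;> linarith
  have := dist_nonneg (x := z) (y := w)
  exact dist_eq_zero.mp (le_antisymm ‹dist z w ≤ 0› ‹0 ≤ dist z w›)

/-- geodesic parametrization of a segment. -/
lemma seg_geodesic (hT : IsRTree T) (x y : T) :
    ∃ f : ℝ → T, f 0 = x ∧ f (dist x y) = y ∧
      (∀ s ∈ Set.Icc (0:ℝ) (dist x y), ∀ t ∈ Set.Icc (0:ℝ) (dist x y),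
        dist (f s) (f t) = |s - t|) ∧
      seg x y = f '' Set.Icc 0 (dist x y) := by
  obtain ⟨f, hf0, hfd, hiso⟩ := hT.1 x y
  refine ⟨f, hf0, hfd, hiso, ?_⟩
  have hd0 : (0:ℝ) ∈ Set.Icc (0:ℝ) (dist x y) := ⟨le_refl _, dist_nonneg⟩
  have hdd : dist x y ∈ Set.Icc (0:ℝ) (dist x y) := ⟨dist_nonneg, le_refl _⟩
  have hmem : ∀ t ∈ Set.Icc (0:ℝ) (dist x y), f t ∈ seg x y := by
    intro t ht
    have h1 : dist x (f t) = t := by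
      rw [← hf0]; rw [hiso 0 hd0 t ht]; rw [abs_of_nonpos (by linarith [ht.1])]; ring
    have h2 : dist (f t) y = dist x y - t := by
      conv_lhs => rw [← hfd]
      rw [hiso t ht _ hdd]; rw [abs_of_nonpos (by linarith [ht.2])]; ring
    show dist x (f t) + dist (f t) y = dist x y
    rw [h1, h2]; ring
  ext z
  constructor
  · intro hz
    set t := dist x z with htdef
    have ht : t ∈ Set.Icc (0:ℝ) (dist x y) := ⟨dist_nonneg, mem_seg_dist_le hz⟩
    refine ⟨t, ht, ?_⟩
    refine seg_unique hT (hmem _ ht) hz ?_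
    have h1 : dist x (f t) = t := by
      conv_lhs => rw [← hf0]
      rw [hiso 0 hd0 _ ht, abs_of_nonpos (by linarith [ht.1])]; ring
    rw [h1]
  · rintro ⟨t, ht, rfl⟩
    exact hmem t ht

/-- segments are convex. -/
lemma seg_convex (hT : IsRTree T) {x y z w : T} (hz : z ∈ seg x y) (hw : w ∈ seg x y) :
    seg z w ⊆ seg x y := by
  intro q hq
  obtain ⟨f, hf0, hfd, hiso, hseg⟩ := seg_geodesic hT x y
  rw [hseg] at hz hw
  obtain ⟨s, hs, rfl⟩ := hz
  obtain ⟨t, ht, rfl⟩ := hw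
  rcases le_total s t with hst | hst
  · set τ := s + dist (f s) q with hτ
    have hd : dist (f s) q ≤ dist (f s) (f t) := mem_seg_dist_le hq
    have hst' : dist (f s) (f t) = t - s := by
      rw [hiso s hs t ht, abs_of_nonpos (by linarith)]; ring
    have hτmem : τ ∈ Set.Icc (0:ℝ) (dist x y) :=
      ⟨by have := dist_nonneg (x := f s) (y := q); simp [hτ]; linarith [hs.1],
       by simp [hτ]; nlinarith [ht.2, hd, hst']⟩
    have hfτ : f τ ∈ seg (f s) (f t) := by
      have h1 : dist (f s) (f τ) = dist (f s) q := by
        rw [hiso s hs τ hτmem, abs_of_nonpos (by simp [hτ])]; simp [hτ]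
      have h2 : dist (f τ) (f t) = dist (f s) (f t) - dist (f s) q := by
        rw [hiso τ hτmem t ht, hst', abs_of_nonpos (by simp [hτ]; nlinarith)]
        simp [hτ]; ring
      show dist (f s) (f τ) + dist (f τ) (f t) = dist (f s) (f t)
      rw [h1, h2]; ring
    have : q = f τ := by
      refine seg_unique hT hq hfτ ?_
      have : dist (f s) (f τ) = dist (f s) q := by
        rw [hiso s hs τ hτmem, abs_of_nonpos (by simp [hτ])]; simp [hτ]
      rw [this]
    rw [this, hseg]; exact ⟨τ, hτmem, rfl⟩
  · rw [seg_comm] at hq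
    set τ := t + dist (f t) q with hτ
    have hd : dist (f t) q ≤ dist (f t) (f s) := mem_seg_dist_le hq
    have hst' : dist (f t) (f s) = s - t := by
      rw [hiso t ht s hs, abs_of_nonpos (by linarith)]; ring
    have hτmem : τ ∈ Set.Icc (0:ℝ) (dist x y) :=
      ⟨by have := dist_nonneg (x := f t) (y := q); simp [hτ]; linarith [ht.1],
       by simp [hτ]; nlinarith [hs.2, hd, hst']⟩
    have hfτ : f τ ∈ seg (f t) (f s) := by
      have h1 : dist (f t) (f τ) = dist (f t) q := by
        rw [hiso t ht τ hτmem, abs_of_nonpos (by simp [hτ])]; simp [hτ]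
      have h2 : dist (f τ) (f s) = dist (f t) (f s) - dist (f t) q := by
        rw [hiso τ hτmem s hs, hst', abs_of_nonpos (by simp [hτ]; nlinarith)]
        simp [hτ]; ring
      show dist (f t) (f τ) + dist (f τ) (f s) = dist (f t) (f s)
      rw [h1, h2]; ring
    have : q = f τ := by
      refine seg_unique hT hq hfτ ?_
      rw [hiso t ht τ hτmem, abs_of_nonpos (by simp [hτ])]; simp [hτ]
    rw [this, hseg]; exact ⟨τ, hτmem, rfl⟩

/-- existence of the median point of a tripod. -/
lemma exists_median (hT : IsRTree T) (x y p : T) :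
    ∃ m : T, m ∈ seg x y ∧ m ∈ seg x p ∧ m ∈ seg y p := by
  obtain ⟨f, hf0, hfd, hiso, hseg⟩ := seg_geodesic hT x p
  set a : ℝ := (dist x y + dist x p - dist y p) / 2 with ha
  have t1 := dist_triangle x y p
  have t2 := dist_triangle y x p
  have t3 := dist_triangle x p y
  rw [dist_comm y x] at t2
  rw [dist_comm p y] at t3
  have haI : a ∈ Set.Icc (0:ℝ) (dist x p) := ⟨by linarith, by linarith⟩
  have hd0 : (0:ℝ) ∈ Set.Icc (0:ℝ) (dist x p) := ⟨le_refl _, dist_nonneg⟩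
  have hdd : dist x p ∈ Set.Icc (0:ℝ) (dist x p) := ⟨dist_nonneg, le_refl _⟩
  set m := f a with hm
  have h1 : dist x m = a := by
    conv_lhs => rw [← hf0]
    rw [hiso 0 hd0 a haI, abs_of_nonpos (by linarith [haI.1])]; ring
  have h2 : dist m p = dist x p - a := by
    conv_lhs => rw [← hfd]
    rw [hiso a haI _ hdd, abs_of_nonpos (by linarith [haI.2])]; ring
  have hxmp : m ∈ seg x p := by
    show dist x m + dist m p = dist x p
    rw [h1, h2]; ring
  have h3 : dist y m = (dist x y + dist y p - dist x p) / 2 := by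
    have hub := hT.2 y m x p
    have c1 : dist y x = dist x y := dist_comm y x
    have c2 : dist m x = dist x m := dist_comm m x
    have c3 : dist m y = dist y m := dist_comm m y
    have low : dist x y ≤ dist x m + dist m y := dist_triangle x m y
    rcases le_max_iff.mp hub with h' | h' <;> linarith
  refine ⟨m, ?_, hxmp, ?_⟩
  · show dist x m + dist m y = dist x y
    rw [h1, dist_comm m y, h3]; ring
  · show dist y m + dist m p = dist y p
    rw [h3, h2]; ring

lemma seg_subset_union (hT : IsRTree T) (x v y : T) : seg x y ⊆ seg x v ∪ seg v y := by
  intro z hz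
  obtain ⟨m, hmxy, hmxv, hmvy⟩ := exists_median hT x y v
  obtain ⟨f, hf0, hfd, hiso, hseg⟩ := seg_geodesic hT x y
  rw [hseg] at hz hmxy
  obtain ⟨t, ht, hzt⟩ := hz
  obtain ⟨s, hs, hms⟩ := hmxy
  have hzseg : f t ∈ seg x y := by rw [hseg]; exact ⟨t, ht, rfl⟩
  have hmseg : f s ∈ seg x y := by rw [hseg]; exact ⟨s, hs, rfl⟩
  rcases le_total t s with hts | hts
  · left
    have hzm : f t ∈ seg x (f s) := by
      show dist x (f t) + dist (f t) (f s) = dist x (f s)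
      have e1 : dist x (f t) = t := by
        conv_lhs => rw [← hf0]
        rw [hiso 0 ⟨le_refl _, dist_nonneg⟩ t ht, abs_of_nonpos (by linarith [ht.1])]; ring
      have e2 : dist x (f s) = s := by
        conv_lhs => rw [← hf0]
        rw [hiso 0 ⟨le_refl _, dist_nonneg⟩ s hs, abs_of_nonpos (by linarith [hs.1])]; ring
      rw [e1, e2, hiso t ht s hs, abs_of_nonpos (by linarith)]; ring
    rw [hzt] at hzm; rw [hms] at hzm
    exact seg_trans_left hzm hmxv
  · right
    rw [seg_comm]
    have hzm : f t ∈ seg y (f s) := by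
      show dist y (f t) + dist (f t) (f s) = dist y (f s)
      have e1 : dist y (f t) = dist x y - t := by
        rw [dist_comm]
        conv_lhs => rw [← hfd]
        rw [hiso t ht _ ⟨dist_nonneg, le_refl _⟩, abs_of_nonpos (by linarith [ht.2])]; ring
      have e2 : dist y (f s) = dist x y - s := by
        rw [dist_comm]
        conv_lhs => rw [← hfd]
        rw [hiso s hs _ ⟨dist_nonneg, le_refl _⟩, abs_of_nonpos (by linarith [hs.2])]; ring
      rw [e1, e2, hiso t ht s hs, abs_of_nonneg (by linarith)]; ring
    rw [hzt] at hzm; rw [hms] at hzm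
    exact seg_trans_left hzm hmvy

lemma isArc_seg (hT : IsRTree T) {x y : T} (h : x ≠ y) : IsArc (seg x y) := by
  obtain ⟨f, hf0, hfd, hiso, hseg⟩ := seg_geodesic hT x y
  exact ⟨0, dist x y, f, dist_pos.mpr h, hiso, hseg⟩

lemma seg_nontrivial (h : x ≠ y) : ¬(seg x y : Set T).Subsingleton := by
  intro hs
  exact h (hs (left_mem_seg x y) (right_mem_seg x y))

/-- every arc is the segment between its endpoints (in an `ℝ`-tree). -/
lemma isArc_eq_seg (hT : IsRTree T) {A : Set T} (hA : IsArc A) :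
    ∃ x y : T, x ≠ y ∧ A = seg x y := by
  obtain ⟨a, b, f, hab, hiso, hAeq⟩ := hA
  have haI : a ∈ Set.Icc a b := ⟨le_refl _, le_of_lt hab⟩
  have hbI : b ∈ Set.Icc a b := ⟨le_of_lt hab, le_refl _⟩
  have hd : dist (f a) (f b) = b - a := by
    rw [hiso a haI b hbI, abs_of_nonpos (by linarith)]; ring
  have hne : f a ≠ f b := by
    intro h; rw [h, dist_self] at hd; linarith
  refine ⟨f a, f b, hne, ?_⟩
  obtain ⟨g, hg0, hgd, hgiso, hgseg⟩ := seg_geodesic hT (f a) (f b)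
  rw [hAeq, hgseg]
  have key : ∀ t ∈ Set.Icc a b, f t = g (t - a) := by
    intro t ht
    have htI : t - a ∈ Set.Icc (0:ℝ) (dist (f a) (f b)) := ⟨by linarith [ht.1], by rw [hd]; linarith [ht.2]⟩
    have hfm : f t ∈ seg (f a) (f b) := by
      show dist (f a) (f t) + dist (f t) (f b) = dist (f a) (f b)
      rw [hiso a haI t ht, hiso t ht b hbI, hd,
        abs_of_nonpos (by linarith [ht.1]), abs_of_nonpos (by linarith [ht.2])]; ring
    have hgm : g (t - a) ∈ seg (f a) (f b) := by rw [hgseg]; exact ⟨t - a, htI, rfl⟩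
    refine seg_unique hT hfm hgm ?_
    have e1 : dist (f a) (f t) = t - a := by
      rw [hiso a haI t ht, abs_of_nonpos (by linarith [ht.1])]; ring
    have e2 : dist (f a) (g (t - a)) = t - a := by
      conv_lhs => rw [← hg0]
      rw [hgiso 0 ⟨le_refl _, dist_nonneg⟩ _ htI, abs_of_nonpos (by linarith [htI.1])]; ring
    rw [e1, e2]
  ext z
  constructor
  · rintro ⟨t, ht, rfl⟩
    exact ⟨t - a, ⟨by linarith [ht.1], by rw [hd]; linarith [ht.2]⟩, (key t ht).symm⟩
  · rintro ⟨t, ht, rfl⟩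
    refine ⟨t + a, ⟨by linarith [ht.1], by rw [hd] at ht; linarith [ht.2]⟩, ?_⟩
    rw [key (t + a) ⟨by linarith [ht.1], by rw [hd] at ht; linarith [ht.2]⟩]
    ring_nf

end SegBasic

section Action
variable {G : Type*} {T : Type*} [Group G] [MulAction G T] [MetricSpace T]

lemma dist_smul' (hiso : ∀ g : G, Isometry fun x : T => g • x) (g : G) (x y : T) :
    dist (g • x) (g • y) = dist x y := (hiso g).dist_eq x y

lemma smul_seg (hiso : ∀ g : G, Isometry fun x : T => g • x) (g : G) (x y : T) :
    g • seg x y = seg (g • x) (g • y) := by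
  ext z
  rw [Set.mem_smul_set_iff_inv_smul_mem]
  have hz : z = g • (g⁻¹ • z) := (smul_inv_smul g z).symm
  constructor
  · intro h
    show dist (g • x) z + dist z (g • y) = dist (g • x) (g • y)
    conv_lhs => rw [hz]
    rw [dist_smul' hiso, dist_smul' hiso, dist_smul' hiso]
    exact h
  · intro h
    have h' : dist (g • x) z + dist z (g • y) = dist (g • x) (g • y) := h
    rw [hz, dist_smul' hiso, dist_smul' hiso, dist_smul' hiso] at h'
    exact h'

lemma smul_subsingleton_iff (g : G) (A : Set T) :
    (g • A).Subsingleton ↔ A.Subsingleton := by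
  constructor
  · intro h a ha b hb
    have := h (Set.smul_mem_smul_set ha) (Set.smul_mem_smul_set hb)
    exact (MulAction.injective g) this
  · intro h
    exact h.image _

lemma smul_isSubtree (hiso : ∀ g : G, Isometry fun x : T => g • x) {Y : Set T}
    (hY : IsSubtree Y) (g : G) : IsSubtree (g • Y) := by
  rintro x ⟨x', hx', rfl⟩ y ⟨y', hy', rfl⟩
  rw [← smul_seg hiso]
  exact Set.smul_set_mono (hY x' hx' y' hy')

/-- the overlap relation on translates of `I`. -/
def OvRel (I : Set T) (g h : G) : Prop := ¬(g • I ∩ h • I).Subsingleton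

lemma OvRel.symm' {I : Set T} {g h : G} (h' : OvRel I g h) : OvRel I h g := by
  unfold OvRel at *; rwa [Set.inter_comm]

lemma OvRel.smul {I : Set T} {a b : G} (g : G) (h : OvRel I a b) : OvRel I (g * a) (g * b) := by
  unfold OvRel at *
  rw [mul_smul, mul_smul, ← Set.smul_set_inter, smul_subsingleton_iff]
  exact h

/-- linked: connected by a chain of overlapping translates. -/
def Linked (I : Set T) (s k : G) : Prop := Relation.ReflTransGen (OvRel I) s k

lemma Linked.smul {I : Set T} {s k : G} (g : G) (h : Linked I s k) :
    Linked I (g * s) (g * k) :=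
  Relation.ReflTransGen.lift (fun a => g * a) (fun _ _ hab => OvRel.smul g hab) _ _ h

lemma Linked.symm' {I : Set T} {s k : G} (h : Linked I s k) : Linked I k s := by
  induction h with
  | refl => exact Relation.ReflTransGen.refl
  | tail _ hr ih => exact Relation.ReflTransGen.head hr.symm' ih

/-- the subtree of points reachable from the basepoint through linked translates. -/
def ZSet (I : Set T) (s : G) (p : T) : Set T :=
  {x | ∃ S : List G, (∀ k ∈ S, Linked I s k) ∧ seg p x ⊆ ⋃ k ∈ S, k • I}

lemma ZSet_isSubtree (hT : IsRTree T) (I : Set T) (s : G) (p : T) :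
    IsSubtree (ZSet I s p) := by
  rintro x ⟨Sx, hSx, hcx⟩ y ⟨Sy, hSy, hcy⟩ z hz
  refine ⟨Sx ++ Sy, ?_, ?_⟩
  · intro k hk
    rcases List.mem_append.mp hk with h | h
    exacts [hSx k h, hSy k h]
  · intro w hw
    have h1 : w ∈ seg p x ∪ seg x z := seg_subset_union hT p x z hw
    have hxz : seg x z ⊆ seg x y := fun q hq => seg_trans_left hq hz
    have hcup : ∀ v ∈ seg p x ∪ seg p y, v ∈ ⋃ k ∈ Sx ++ Sy, k • I := by
      intro v hv
      rcases hv with h | h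
      · rcases Set.mem_iUnion₂.mp (hcx h) with ⟨k, hk, hvk⟩
        exact Set.mem_iUnion₂.mpr ⟨k, List.mem_append.mpr (Or.inl hk), hvk⟩
      · rcases Set.mem_iUnion₂.mp (hcy h) with ⟨k, hk, hvk⟩
        exact Set.mem_iUnion₂.mpr ⟨k, List.mem_append.mpr (Or.inr hk), hvk⟩
    rcases h1 with h | h
    · exact hcup _ (Or.inl h)
    · have := hxz h
      have h2 : w ∈ seg x p ∪ seg p y := seg_subset_union hT x p y this
      rcases h2 with h' | h'
      · rw [seg_comm] at h'; exact hcup _ (Or.inl h')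
      · exact hcup _ (Or.inr h')

lemma smul_ZSet_subset (hiso : ∀ g : G, Isometry fun x : T => g • x)
    (g : G) (I : Set T) (s : G) (p : T) :
    g • ZSet I s p ⊆ ZSet I (g * s) (g • p) := by
  rintro _ ⟨x, ⟨S, hS, hc⟩, rfl⟩
  refine ⟨S.map (fun k => g * k), ?_, ?_⟩
  · intro k hk
    rcases List.mem_map.mp hk with ⟨k', hk', rfl⟩
    exact (hS k' hk').smul g
  · rw [← smul_seg hiso]
    rintro w ⟨w', hw', rfl⟩
    rcases Set.mem_iUnion₂.mp (hc hw') with ⟨k, hk, hwk⟩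
    refine Set.mem_iUnion₂.mpr ⟨g * k, List.mem_map.mpr ⟨k, hk, rfl⟩, ?_⟩
    rw [mul_smul]
    exact Set.smul_mem_smul_set hwk

lemma smul_ZSet (hiso : ∀ g : G, Isometry fun x : T => g • x)
    (g : G) (I : Set T) (s : G) (p : T) :
    g • ZSet I s p = ZSet I (g * s) (g • p) := by
  refine le_antisymm (smul_ZSet_subset hiso g I s p) ?_
  show ZSet I (g * s) (g • p) ⊆ g • ZSet I s p
  rw [Set.subset_smul_set_iff]
  have := smul_ZSet_subset hiso g⁻¹ I (g * s) (g • p)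
  simpa [inv_mul_cancel_left] using this

end Action

section Core
variable {G : Type*} {T : Type*} [Group G] [MulAction G T] [MetricSpace T]

open MeasureTheory

/-- if two finite families of translates both cover a nondegenerate segment, some pair
of translates (one from each family) overlaps in more than a point. -/
lemma exists_overlap (hT : IsRTree T) {I : Set T} {u v : T} (huv : u ≠ v)
    {Lg Lh : List G} (hg : seg u v ⊆ ⋃ k ∈ Lg, k • I) (hh : seg u v ⊆ ⋃ k ∈ Lh, k • I) :
    ∃ k ∈ Lg, ∃ l ∈ Lh, OvRel I k l := by
  obtain ⟨f, hf0, hfd, hfiso, hseg⟩ := seg_geodesic hT u v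
  set d := dist u v with hd
  have hd0 : 0 < d := dist_pos.mpr huv
  set E : G → Set ℝ := fun k => f ⁻¹' (k • I) ∩ Set.Icc 0 d with hE
  have hmemseg : ∀ t ∈ Set.Icc (0:ℝ) d, f t ∈ seg u v := by
    intro t ht; rw [hseg]; exact ⟨t, ht, rfl⟩
  have hIccvol : volume (Set.Icc (0:ℝ) d) ≠ 0 := by
    rw [Real.volume_Icc]
    simp only [sub_zero]
    exact (ENNReal.ofReal_pos.mpr hd0).ne'
  -- first family
  have hcov1 : Set.Icc (0:ℝ) d ⊆ ⋃ k ∈ Lg, E k := by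
    intro t ht
    rcases Set.mem_iUnion₂.mp (hg (hmemseg t ht)) with ⟨k, hk, hmem⟩
    exact Set.mem_iUnion₂.mpr ⟨k, hk, ⟨hmem, ht⟩⟩
  have h1 : ∃ k ∈ Lg, volume (E k) ≠ 0 := by
    by_contra hcon
    push_neg at hcon
    have : volume (⋃ k ∈ Lg, E k) = 0 :=
      (measure_biUnion_null_iff (Lg.finite_toSet.countable)).mpr hcon
    exact hIccvol (le_antisymm (this ▸ measure_mono hcov1) zero_le)
  obtain ⟨k, hk, hkvol⟩ := h1
  have hcov2 : E k ⊆ ⋃ l ∈ Lh, (E k ∩ E l) := by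
    intro t ht
    rcases Set.mem_iUnion₂.mp (hh (hmemseg t ht.2)) with ⟨l, hl, hmem⟩
    exact Set.mem_iUnion₂.mpr ⟨l, hl, ⟨ht, ⟨hmem, ht.2⟩⟩⟩
  have h2 : ∃ l ∈ Lh, volume (E k ∩ E l) ≠ 0 := by
    by_contra hcon
    push_neg at hcon
    have : volume (⋃ l ∈ Lh, (E k ∩ E l)) = 0 :=
      (measure_biUnion_null_iff (Lh.finite_toSet.countable)).mpr hcon
    exact hkvol (le_antisymm (this ▸ measure_mono hcov2) zero_le)
  obtain ⟨l, hl, hlvol⟩ := h2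
  refine ⟨k, hk, l, hl, ?_⟩
  intro hsub
  have hsub' : (E k ∩ E l).Subsingleton := by
    intro t1 h1' t2 h2'
    by_contra hne
    have hft : f t1 ≠ f t2 := by
      intro heq
      have := hfiso t1 h1'.1.2 t2 h2'.1.2
      rw [heq, dist_self] at this
      exact hne (by rw [← sub_eq_zero]; exact (abs_eq_zero.mp this.symm))
    exact hft (hsub ⟨h1'.1.1, h1'.2.1⟩ ⟨h2'.1.1, h2'.2.1⟩)
  rcases hsub'.eq_empty_or_singleton with h | ⟨t0, h⟩
  · rw [h] at hlvol; simp at hlvol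
  · rw [h] at hlvol; simp at hlvol

/-- core: two `ZSet`s which share a point and are linked by an overlapping pair coincide. -/
lemma ZSet_subset' (hT : IsRTree T) {I : Set T} {s t : G} {p q u : T}
    (hus : u ∈ ZSet I s p) (hut : u ∈ ZSet I t q)
    {k l : G} (hsk : Linked I s k) (htl : Linked I t l) (hkl : OvRel I k l) :
    ZSet I s p ⊆ ZSet I t q := by
  obtain ⟨Su, hSu, hcu⟩ := hus
  obtain ⟨Tu, hTu, hcu'⟩ := hut
  have cross : ∀ k' : G, Linked I s k' → Linked I t k' := by
    intro k' h
    have h1 : Linked I t k := Relation.ReflTransGen.trans htl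
      (Relation.ReflTransGen.single hkl.symm')
    have h2 : Linked I k s := hsk.symm'
    exact Relation.ReflTransGen.trans (Relation.ReflTransGen.trans h1 h2) h
  rintro x ⟨Sx, hSx, hcx⟩
  refine ⟨Tu ++ (Su ++ Sx), ?_, ?_⟩
  · intro k' hk'
    rcases List.mem_append.mp hk' with h | h
    · exact hTu k' h
    · rcases List.mem_append.mp h with h' | h'
      exacts [cross k' (hSu k' h'), cross k' (hSx k' h')]
  · intro w hw
    have h1 : w ∈ seg q u ∪ seg u x := seg_subset_union hT q u x hw
    have key : ∀ v, v ∈ seg q u ∨ v ∈ seg p u ∨ v ∈ seg p x →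
        v ∈ ⋃ k' ∈ Tu ++ (Su ++ Sx), k' • I := by
      rintro v (h | h | h)
      · rcases Set.mem_iUnion₂.mp (hcu' h) with ⟨k', hk', hv⟩
        exact Set.mem_iUnion₂.mpr ⟨k', List.mem_append.mpr (Or.inl hk'), hv⟩
      · rcases Set.mem_iUnion₂.mp (hcu h) with ⟨k', hk', hv⟩
        exact Set.mem_iUnion₂.mpr
          ⟨k', List.mem_append.mpr (Or.inr (List.mem_append.mpr (Or.inl hk'))), hv⟩
      · rcases Set.mem_iUnion₂.mp (hcx h) with ⟨k', hk', hv⟩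
        exact Set.mem_iUnion₂.mpr
          ⟨k', List.mem_append.mpr (Or.inr (List.mem_append.mpr (Or.inr hk'))), hv⟩
    rcases h1 with h | h
    · exact key w (Or.inl h)
    · rcases seg_subset_union hT u p x h with h' | h'
      · rw [seg_comm] at h'
        exact key w (Or.inr (Or.inl h'))
      · exact key w (Or.inr (Or.inr h'))

lemma ZSet_eq' (hT : IsRTree T) {I : Set T} {s t : G} {p q u : T}
    (hus : u ∈ ZSet I s p) (hut : u ∈ ZSet I t q)
    {k l : G} (hsk : Linked I s k) (htl : Linked I t l) (hkl : OvRel I k l) :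
    ZSet I s p = ZSet I t q :=
  le_antisymm (ZSet_subset' hT hus hut hsk htl hkl)
    (ZSet_subset' hT hut hus htl hsk hkl.symm')

/-- basepoint translate is inside the `ZSet`. -/
lemma smul_subset_ZSet (hT : IsRTree T) {I : Set T} {s : G} {p : T}
    (hsub : IsSubtree (s • I)) (hp : p ∈ s • I) : s • I ⊆ ZSet I s p := by
  intro x hx
  refine ⟨[s], ?_, ?_⟩
  · intro k hk
    rw [List.mem_singleton] at hk
    subst hk
    exact Relation.ReflTransGen.refl
  · intro w hw
    have : w ∈ s • I := hsub p hp x hx hw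
    simpa using this

end Core

section Chains
variable {G : Type*} {T : Type*} [Group G] [MulAction G T] [MetricSpace T]

lemma path_of_linked {I : Set T} {s k : G} (h : Linked I s k) :
    ∃ L : List G, L.head? = some s ∧ L.getLast? = some k ∧ L.Chain' (OvRel I) := by
  induction h with
  | refl => exact ⟨[s], rfl, rfl, List.isChain_singleton s⟩
  | @tail b c _ hr ih =>
    obtain ⟨L, hh, hl, hc⟩ := ih
    have hLne : L ≠ [] := by intro h'; rw [h'] at hh; simp at hh
    refine ⟨L ++ [c], ?_, List.getLast?_concat, ?_⟩
    · cases L with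
      | nil => exact absurd rfl hLne
      | cons a L' => simpa using hh
    · show List.IsChain _ _; rw [List.isChain_append]
      refine ⟨hc, List.isChain_singleton c, ?_⟩
      intro x hx y hy
      simp only [List.head?_cons, Option.mem_def, Option.some.injEq] at hy
      rw [hl] at hx
      simp only [Option.mem_def, Option.some.injEq] at hx
      subst hx; subst hy
      exact hr

/-- a round trip: a chain from `s` back to `s` passing through `k`. -/
lemma roundTrip_of_linked {I : Set T} {s k : G} (h : Linked I s k) :
    ∃ L : List G, L.head? = some s ∧ L.getLast? = some s ∧ L.Chain' (OvRel I) ∧ k ∈ L := by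
  obtain ⟨L, hh, hl, hc⟩ := path_of_linked h
  have hLne : L ≠ [] := by intro h'; rw [h'] at hh; simp at hh
  have hrev : L.reverse.head? = some k := by rw [List.head?_reverse]; exact hl
  obtain ⟨M, hM⟩ : ∃ M, L.reverse = k :: M := by
    cases hLrev : L.reverse with
    | nil => rw [hLrev] at hrev; simp at hrev
    | cons a M => rw [hLrev] at hrev; simp at hrev; exact ⟨M, by rw [hrev]⟩
  have hcrev : L.reverse.Chain' (OvRel I) := by
    show List.IsChain _ _; rw [List.isChain_reverse]
    exact hc.imp (fun a b hab => hab.symm')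
  have hkM : (k :: M).Chain' (OvRel I) := hM ▸ hcrev
  refine ⟨L ++ M, ?_, ?_, ?_, ?_⟩
  · cases L with
    | nil => exact absurd rfl hLne
    | cons a L' => simpa using hh
  · cases M with
    | nil =>
      have : L = [k] := by
        have := congrArg List.reverse hM
        simpa using this
      rw [this] at hh ⊢
      simp at hh
      simp [hh]
    | cons m M' =>
      rw [List.getLast?_append]
      have : (m :: M').getLast? = some s := by
        have h1 : (k :: m :: M').getLast? = L.reverse.getLast? := by rw [hM]
        rw [List.getLast?_reverse, hh, List.getLast?_cons_cons] at h1
        exact h1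
      rw [this]
      rfl
  · show List.IsChain _ _; rw [List.isChain_append]
    refine ⟨hc, hkM.tail, ?_⟩
    intro x hx y hy
    rw [hl] at hx
    simp only [Option.mem_def, Option.some.injEq] at hx
    subst hx
    cases M with
    | nil => simp at hy
    | cons m M' =>
      simp only [List.head?_cons, Option.mem_def, Option.some.injEq] at hy
      subst hy
      exact (List.isChain_cons.mp hkM).1 m rfl
  · have : k ∈ L.reverse := by rw [hM]; exact List.mem_cons_self
    exact List.mem_append.mpr (Or.inl (List.mem_reverse.mp this))

/-- glue round trips: a single chain starting and ending at `s` containing all of `S`. -/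
lemma chain_of_linked {I : Set T} {s : G} (hss : OvRel I s s) (S : List G)
    (hS : ∀ k ∈ S, Linked I s k) :
    ∃ C : List G, C.head? = some s ∧ C.getLast? = some s ∧ C.Chain' (OvRel I) ∧
      ∀ k ∈ S, k ∈ C := by
  induction S with
  | nil => exact ⟨[s], rfl, rfl, List.isChain_singleton s, by simp⟩
  | cons k S' ih =>
    obtain ⟨C', hh', hl', hc', hmem'⟩ := ih (fun k' hk' => hS k' (List.mem_cons_of_mem k hk'))
    obtain ⟨R, hhR, hlR, hcR, hkR⟩ := roundTrip_of_linked (hS k (List.mem_cons_self))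
    have hRne : R ≠ [] := by intro h'; rw [h'] at hhR; simp at hhR
    have hC'ne : C' ≠ [] := by intro h'; rw [h'] at hh'; simp at hh'
    refine ⟨R ++ C', ?_, ?_, ?_, ?_⟩
    · cases R with
      | nil => exact absurd rfl hRne
      | cons a R' => simpa using hhR
    · rw [List.getLast?_append]
      rw [hl']
      rfl
    · show List.IsChain _ _; rw [List.isChain_append]
      refine ⟨hcR, hc', ?_⟩
      intro x hx y hy
      rw [hlR] at hx; rw [hh'] at hy
      simp only [Option.mem_def, Option.some.injEq] at hx hy
      subst hx; subst hy
      exact hss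
    · intro k' hk'
      rcases List.mem_cons.mp hk' with h | h
      · subst h; exact List.mem_append.mpr (Or.inl hkR)
      · exact List.mem_append.mpr (Or.inr (hmem' k' h))

end Chains

section Forward
variable {G : Type*} {T : Type*} [Group G] [MulAction G T] [MetricSpace T]

lemma forward_helper (hT : IsRTree T) (hInd : IsIndecomposable G T)
    {F : Set (Set T)} (hF : IsTransverseFamily G F) {Y : Set T} (hYF : Y ∈ F)
    {x y p m : T} (hx : x ∈ Y) (hy : y ∈ Y) (hxy : x ≠ y) (hp : p ∉ Y)
    (hm : m ∈ Y) (hmxp : m ∈ seg x p) (hmx : m ≠ x) : False := by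
  have hxp : x ≠ p := fun h => hp (h ▸ hx)
  obtain ⟨r, g, hcov, hchain⟩ := hInd (seg x y) (seg x p) (isArc_seg hT hxy) (isArc_seg hT hxp)
  have hIY : seg x y ⊆ Y := hF.subtree Y hYF x hx y hy
  have hstep : ∀ i : Fin r, g i.castSucc • Y = g i.succ • Y := by
    intro i
    by_contra hne
    refine hchain i ?_
    refine Set.Subsingleton.anti
      (hF.transverse _ (hF.invariant _ _ hYF) _ (hF.invariant _ _ hYF) hne) ?_
    exact Set.inter_subset_inter (Set.smul_set_mono hIY) (Set.smul_set_mono hIY)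
  have hall : ∀ i, g i • Y = g 0 • Y := by
    intro i
    induction i using Fin.induction with
    | zero => rfl
    | succ j ih => rw [← hstep j]; exact ih
  have hJZ : seg x p ⊆ g 0 • Y := by
    intro z hz
    rcases Set.mem_iUnion.mp (hcov hz) with ⟨i, hi⟩
    rw [← hall i]
    exact Set.smul_set_mono hIY hi
  have hZF : g 0 • Y ∈ F := hF.invariant _ _ hYF
  have hYZ : Y = g 0 • Y := by
    by_contra hne
    exact hmx (hF.transverse Y hYF _ hZF hne ⟨hm, hJZ hmxp⟩ ⟨hx, hJZ (left_mem_seg x p)⟩)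
  exact hp (hYZ ▸ hJZ (right_mem_seg x p))

lemma forward_dir (hT : IsRTree T) (hInd : IsIndecomposable G T)
    {F : Set (Set T)} (hne : F.Nonempty) (hF : IsTransverseFamily G F)
    (hproper : ∀ Y ∈ F, Y ≠ Set.univ) : False := by
  obtain ⟨Y, hYF⟩ := hne
  obtain ⟨x, hx, y, hy, hxy⟩ := Set.not_subsingleton_iff.mp (hF.nondeg Y hYF)
  obtain ⟨p, hp⟩ : ∃ p, p ∉ Y := by
    by_contra hcon
    push_neg at hcon
    exact hproper Y hYF (Set.eq_univ_of_forall hcon)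
  obtain ⟨m, hmxy, hmxp, hmyp⟩ := exists_median hT x y p
  have hmY : m ∈ Y := hF.subtree Y hYF x hx y hy hmxy
  rcases ne_or_eq m x with hmx | hmx
  · exact forward_helper hT hInd hF hYF hx hy hxy hp hmY hmxp hmx
  · have hmy : m ≠ y := by rw [hmx]; exact hxy
    exact forward_helper hT hInd hF hYF hy hx hxy.symm hp hmY hmyp hmy

end Forward

section Backward
variable {G : Type*} {T : Type*} [Group G] [MulAction G T] [MetricSpace T]

lemma backward_dir (hT : IsRTree T) (hiso : ∀ g : G, Isometry fun x : T => g • x)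
    (hInd : ¬IsIndecomposable G T) :
    ∃ F : Set (Set T), F.Nonempty ∧ IsTransverseFamily G F ∧ ∀ Y ∈ F, Y ≠ Set.univ := by
  rw [IsIndecomposable] at hInd
  push_neg at hInd
  obtain ⟨I, J, hI, hJ, hIJ⟩ := hInd
  obtain ⟨xI, yI, hxyI, hIeq⟩ := isArc_eq_seg hT hI
  obtain ⟨xJ, yJ, hxyJ, hJeq⟩ := isArc_eq_seg hT hJ
  set p := xI with hp
  have hpI : p ∈ I := by rw [hIeq]; exact left_mem_seg xI yI
  have hInontriv : ¬I.Subsingleton := by rw [hIeq]; exact seg_nontrivial hxyI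
  have hIsub : IsSubtree I := by
    rw [hIeq]; intro a ha b hb; exact seg_convex hT ha hb
  have hII : OvRel (T := T) I (1 : G) 1 := by
    show ¬((1 : G) • I ∩ (1 : G) • I).Subsingleton
    simpa [one_smul] using hInontriv
  set Z₀ := ZSet I (1 : G) p with hZ₀
  have hIZ : I ⊆ Z₀ := by
    have h1 : (1 : G) • I = I := one_smul G I
    have := smul_subset_ZSet (G := G) hT (s := 1) (p := p) (by rw [h1]; exact hIsub)
      (by rw [h1]; exact hpI)
    rwa [h1] at this
  refine ⟨Set.range (fun g : G => g • Z₀), ⟨Z₀, 1, one_smul G Z₀⟩, ?_, ?_⟩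
  · constructor
    · rintro g Y ⟨h, rfl⟩
      exact ⟨g * h, (smul_smul g h Z₀).symm⟩
    · rintro Y ⟨g, rfl⟩
      exact smul_isSubtree hiso (ZSet_isSubtree hT I 1 p) g
    · rintro Y ⟨g, rfl⟩ hss
      have : (g • I).Subsingleton := hss.anti (Set.smul_set_mono hIZ)
      exact hInontriv ((smul_subsingleton_iff g I).mp this)
    · rintro Y ⟨g, rfl⟩ Y' ⟨h, rfl⟩ hne
      by_contra hcon
      obtain ⟨u, hu, v, hv, huv⟩ := Set.not_subsingleton_iff.mp hcon
      dsimp only at hu hv hne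
      have hgZ : g • Z₀ = ZSet I g (g • p) := by
        rw [hZ₀, smul_ZSet hiso, mul_one]
      have hhZ : h • Z₀ = ZSet I h (h • p) := by
        rw [hZ₀, smul_ZSet hiso, mul_one]
      rw [hgZ, hhZ] at hu hv
      obtain ⟨Su, hSu, hcSu⟩ := hu.1
      obtain ⟨Sv, hSv, hcSv⟩ := hv.1
      obtain ⟨Tu, hTu, hcTu⟩ := hu.2
      obtain ⟨Tv, hTv, hcTv⟩ := hv.2
      have hcovg : seg u v ⊆ ⋃ k ∈ Su ++ Sv, k • I := by
        intro w hw
        rcases seg_subset_union hT u (g • p) v hw with h' | h'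
        · rw [seg_comm] at h'
          rcases Set.mem_iUnion₂.mp (hcSu h') with ⟨k, hk, hwk⟩
          exact Set.mem_iUnion₂.mpr ⟨k, List.mem_append.mpr (Or.inl hk), hwk⟩
        · rcases Set.mem_iUnion₂.mp (hcSv h') with ⟨k, hk, hwk⟩
          exact Set.mem_iUnion₂.mpr ⟨k, List.mem_append.mpr (Or.inr hk), hwk⟩
      have hcovh : seg u v ⊆ ⋃ k ∈ Tu ++ Tv, k • I := by
        intro w hw
        rcases seg_subset_union hT u (h • p) v hw with h' | h'
        · rw [seg_comm] at h'
          rcases Set.mem_iUnion₂.mp (hcTu h') with ⟨k, hk, hwk⟩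
          exact Set.mem_iUnion₂.mpr ⟨k, List.mem_append.mpr (Or.inl hk), hwk⟩
        · rcases Set.mem_iUnion₂.mp (hcTv h') with ⟨k, hk, hwk⟩
          exact Set.mem_iUnion₂.mpr ⟨k, List.mem_append.mpr (Or.inr hk), hwk⟩
      obtain ⟨k, hk, l, hl, hkl⟩ := exists_overlap hT huv hcovg hcovh
      have hgk : Linked I g k := by
        rcases List.mem_append.mp hk with h' | h'
        exacts [hSu k h', hSv k h']
      have hhl : Linked I h l := by
        rcases List.mem_append.mp hl with h' | h'
        exacts [hTu l h', hTv l h']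
      apply hne
      rw [hgZ, hhZ]
      exact ZSet_eq' hT hu.1 hu.2 hgk hhl hkl
  · rintro Y ⟨g, rfl⟩ huniv
    have hZuniv : Z₀ = Set.univ := by
      have := congrArg (fun S => g⁻¹ • S) huniv
      simpa [smul_smul, Set.smul_set_univ] using this
    -- every point is reachable; build a chain covering J, contradiction
    have hxJ : xJ ∈ Z₀ := hZuniv ▸ Set.mem_univ xJ
    have hyJ : yJ ∈ Z₀ := hZuniv ▸ Set.mem_univ yJ
    obtain ⟨SX, hSX, hcSX⟩ := hxJ
    obtain ⟨SY, hSY, hcSY⟩ := hyJ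
    obtain ⟨C, hhC, hlC, hcC, hmemC⟩ := chain_of_linked hII (SX ++ SY) (by
      intro k hk
      rcases List.mem_append.mp hk with h' | h'
      exacts [hSX k h', hSY k h'])
    have hCne : C ≠ [] := by intro h'; rw [h'] at hhC; simp at hhC
    have hCpos : 0 < C.length := List.length_pos_iff.mpr hCne
    set r := C.length - 1 with hrdef
    have hr : C.length = r + 1 := (Nat.succ_pred_eq_of_pos hCpos).symm
    set gfun : Fin (r + 1) → G := fun i => C.get (Fin.cast hr.symm i) with hgfun
    have hcovJ : J ⊆ ⋃ i, gfun i • I := by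
      intro z hz
      have hz' : z ∈ seg xJ yJ := hJeq ▸ hz
      have : z ∈ ⋃ k ∈ SX ++ SY, k • I := by
        rcases seg_subset_union hT xJ p yJ hz' with h' | h'
        · rw [seg_comm] at h'
          rcases Set.mem_iUnion₂.mp (hcSX h') with ⟨k, hk, hwk⟩
          exact Set.mem_iUnion₂.mpr ⟨k, List.mem_append.mpr (Or.inl hk), hwk⟩
        · rcases Set.mem_iUnion₂.mp (hcSY h') with ⟨k, hk, hwk⟩
          exact Set.mem_iUnion₂.mpr ⟨k, List.mem_append.mpr (Or.inr hk), hwk⟩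
      rcases Set.mem_iUnion₂.mp this with ⟨k, hk, hzk⟩
      obtain ⟨n, hn⟩ := List.mem_iff_get.mp (hmemC k hk)
      refine Set.mem_iUnion.mpr ⟨Fin.cast hr n, ?_⟩
      have he : gfun (Fin.cast hr n) = k := hn
      rw [he]
      exact hzk
    obtain ⟨i, hi⟩ := hIJ r gfun hcovJ
    have hi' : i.1 < C.length - 1 := by omega
    have := List.isChain_iff_getElem.mp hcC i.1 (by omega)
    apply this
    exact hi

end Backward


/-- A minimal `F_N`-tree is indecomposable if and only if it admits no (nonempty) transverse
family of proper subtrees. -/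
theorem indecomposable_iff_no_transverseFamily
    {T : Type*} [MetricSpace T] {N : ℕ} [MulAction (FreeGroup (Fin N)) T]
    (hT : IsRTree T) (hiso : ∀ g : FreeGroup (Fin N), Isometry fun x : T => g • x)
    (hmin : IsMinimalAction (FreeGroup (Fin N)) T) :
    IsIndecomposable (FreeGroup (Fin N)) T ↔
      ¬∃ F : Set (Set T), F.Nonempty ∧ IsTransverseFamily (FreeGroup (Fin N)) F ∧
        ∀ Y ∈ F, Y ≠ Set.univ := by
  constructor
  · rintro hInd ⟨F, hne, hF, hprop⟩
    exact forward_dir hT hInd hne hF hprop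
  · intro hno
    by_contra hInd
    exact hno (backward_dir hT hiso hInd)
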